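/- Let λ be an infinite regular cardinal and let K be a class of nonempty topological spaces. Then the following are equivalent: (1) every product of members of K (repetitions among the factors allowed) satisfies CAP_λ; (2) every product of 2^{2^{λ}} many members of K (repetitions allowed) satisfies CAP_λ; (3) there exists a uniform ultrafilter F on λ such that every member of K is F-compact. -/

import Mathlib

universe u v

open Cardinal

/-- `p` is an `F`-limit point of the sequence `s`. -/
def FLimitPt {I : Type*} {X : Type*} [TopologicalSpace X] (F : Filter I)
    (s : I → X) (p : X) : Prop :=
  ∀ U : Set X, IsOpen U → p ∈ U → {i | s i ∈ U} ∈ F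

/-- `X` is `F`-compact: every sequence indexed by the underlying set of `F`
has an `F`-limit point. -/
def FCompact {I : Type*} (F : Filter I) (X : Type*) [TopologicalSpace X] : Prop :=
  ∀ s : I → X, ∃ p : X, FLimitPt F s p

/-- `X` satisfies `CAP lam`: every subset of cardinality `lam` has a complete
accumulation point. -/
def CAP (lam : Cardinal.{u}) (X : Type u) [TopologicalSpace X] : Prop :=
  ∀ A : Set X, #A = lam →
    ∃ x : X, ∀ U : Set X, IsOpen U → x ∈ U → #(↥(U ∩ A)) = #A

section helpers

open Filter Set

lemma fLimitPt_iff_tendsto {I X : Type*} [TopologicalSpace X] (F : Filter I)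
    (s : I → X) (p : X) : FLimitPt F s p ↔ Filter.Tendsto s F (nhds p) :=
  tendsto_nhds.symm

/-- the filter of sets with complement of size `< lam` -/
def cosmall (lam : Cardinal.{u}) (h : Cardinal.aleph0 ≤ lam) : Filter lam.out where
  sets := {s | #(↥sᶜ) < lam}
  univ_sets := by
    simp only [Set.mem_setOf_eq, Set.compl_univ, Cardinal.mk_emptyCollection]
    exact lt_of_lt_of_le Cardinal.aleph0_pos h
  sets_of_superset := by
    intro s t hs hst
    exact lt_of_le_of_lt (Cardinal.mk_le_mk_of_subset (Set.compl_subset_compl.mpr hst)) hs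
  inter_sets := by
    intro s t hs ht
    simp only [Set.mem_setOf_eq, Set.compl_inter]
    exact lt_of_le_of_lt (Cardinal.mk_union_le _ _)
      (Cardinal.add_lt_of_lt h hs ht)

lemma mem_cosmall {lam : Cardinal.{u}} (h : Cardinal.aleph0 ≤ lam) (s : Set lam.out) :
    s ∈ cosmall lam h ↔ #(↥sᶜ) < lam := Iff.rfl

lemma exists_uniform_ultra {lam : Cardinal.{u}} (h : Cardinal.aleph0 ≤ lam)
    (G : Filter lam.out) (hG : ∀ t ∈ G, lam ≤ #t) :
    ∃ D : Ultrafilter lam.out, (∀ A ∈ D, #A = lam) ∧ (D : Filter lam.out) ≤ G := by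
  have hne : Filter.NeBot (cosmall lam h ⊓ G) := by
    rw [← Filter.forall_mem_nonempty_iff_neBot]
    intro u hu
    rw [Filter.mem_inf_iff] at hu
    obtain ⟨s, hs, t, ht, rfl⟩ := hu
    rw [mem_cosmall] at hs
    have hts : ¬ t ⊆ sᶜ := by
      intro hsub
      exact absurd (lt_of_le_of_lt (Cardinal.mk_le_mk_of_subset hsub) hs)
        (not_lt.mpr (hG t ht))
    obtain ⟨x, hxt, hxs⟩ := Set.not_subset.mp hts
    exact ⟨x, Set.notMem_compl_iff.mp hxs, hxt⟩
  obtain ⟨D, hD⟩ := Ultrafilter.exists_le (cosmall lam h ⊓ G)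
  refine ⟨D, ?_, le_trans hD inf_le_right⟩
  intro A hA
  have hle : #A ≤ lam := by
    have := Cardinal.mk_set_le A
    rwa [Cardinal.mk_out] at this
  rcases lt_or_eq_of_le hle with hlt | heq
  · exfalso
    have hAc : Aᶜ ∈ cosmall lam h := by rw [mem_cosmall]; rwa [compl_compl]
    have : Aᶜ ∈ D := hD (Filter.mem_inf_of_left hAc)
    have h0 : (∅ : Set lam.out) ∈ D := by
      have := (D : Filter lam.out).inter_sets hA this
      rwa [Set.inter_compl_self] at this
    exact D.neBot.ne (Filter.empty_mem_iff_bot.mp h0)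
  · exact heq

lemma fcompact_cap {lam : Cardinal.{u}} (X : Type u) [TopologicalSpace X]
    (D : Ultrafilter lam.out) (hunif : ∀ A ∈ D, #A = lam)
    (hc : FCompact (D : Filter lam.out) X) : CAP lam X := by
  intro A hA
  have : #(lam.out) = #A := by rw [Cardinal.mk_out]; exact hA.symm
  obtain ⟨e⟩ := Cardinal.eq.mp this
  obtain ⟨p, hp⟩ := hc (fun i => (e i : X))
  refine ⟨p, fun U hU hpU => ?_⟩
  have hmem : {i | (e i : X) ∈ U} ∈ D := hp U hU hpU
  have h1 : lam ≤ #(↥(U ∩ A)) := by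
    rw [← hunif _ hmem]
    refine Cardinal.mk_le_of_injective (f := fun i : {i | (e i : X) ∈ U} =>
      (⟨(e i : X), i.2, (e i).2⟩ : ↥(U ∩ A))) ?_
    intro i j hij
    simp only [Subtype.mk_eq_mk] at hij
    exact Subtype.ext (e.injective (Subtype.ext (congrArg (fun z : ↥(U ∩ A) => (z : X)) hij)))
  have h2 : #(↥(U ∩ A)) ≤ #A := Cardinal.mk_le_mk_of_subset Set.inter_subset_right
  rw [hA]
  exact le_antisymm (le_of_le_of_eq h2 hA) h1

lemma fcompact_pi {I : Type*} (F : Filter I) {J : Type*} (X : J → Type*)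
    [∀ j, TopologicalSpace (X j)] (hc : ∀ j, FCompact F (X j)) :
    FCompact F (∀ j, X j) := by
  intro s
  choose p hp using fun j => hc j (fun i => s i j)
  refine ⟨p, (fLimitPt_iff_tendsto _ _ _).mpr ?_⟩
  rw [tendsto_pi_nhds]
  intro j
  exact (fLimitPt_iff_tendsto _ _ _).mp (hp j)

end helpers

theorem stmt_7 (lam : Cardinal.{u}) (hreg : lam.IsRegular)
    (K : ∀ X : Type u, TopologicalSpace X → Prop)
    (hne : ∀ (X : Type u) (t : TopologicalSpace X), K X t → Nonempty X) :
    List.TFAE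
      [ -- (1) every product of members of `K` satisfies `CAP lam`
        ∀ (J : Type u) (X : J → Type u) [t : ∀ j, TopologicalSpace (X j)],
          (∀ j, K (X j) (t j)) → CAP lam (∀ j, X j),
        -- (2) every product of `2 ^ 2 ^ lam` many members of `K` satisfies
        -- `CAP lam`
        ∀ (J : Type u), #J = (2 : Cardinal.{u}) ^ ((2 : Cardinal.{u}) ^ lam) →
          ∀ (X : J → Type u) [t : ∀ j, TopologicalSpace (X j)],
            (∀ j, K (X j) (t j)) → CAP lam (∀ j, X j),
        -- (3) there is a uniform ultrafilter `F` over (a set of cardinality)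
        -- `lam` such that every member of `K` is `F`-compact
        ∃ F : Ultrafilter lam.out, (∀ A ∈ F, #A = lam) ∧
          ∀ (X : Type u) [t : TopologicalSpace X], K X t →
            FCompact (F : Filter lam.out) X ] := by

  have hinf : Cardinal.aleph0 ≤ lam := hreg.aleph0_le
  tfae_have 1 → 2 := fun h J _ => h J
  tfae_have 3 → 1 := by
    rintro ⟨F, hunif, hcomp⟩ J X t hK
    exact fcompact_cap _ F hunif (fcompact_pi _ X (fun j => hcomp (X j) (hK j)))
  tfae_have 2 → 3 := by
    intro h2
    by_contra h3
    -- every uniform ultrafilter has a bad space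
    have hbad : ∀ F : Ultrafilter lam.out, (∀ A ∈ F, #A = lam) →
        ∃ X : Type u, ∃ t : TopologicalSpace X, K X t ∧
          ∃ s : lam.out → X, ∀ p : X, ¬ FLimitPt (F : Filter lam.out) s p := by
      intro F hF
      by_contra hc
      push_neg at hc
      refine h3 ⟨F, hF, ?_⟩
      intro X t hKX
      exact hc X t hKX
    -- the subtype of uniform ultrafilters
    have hbad' : ∀ F : {F : Ultrafilter lam.out // ∀ A ∈ F, #A = lam},
        ∃ X : Type u, ∃ t : TopologicalSpace X, K X t ∧
          ∃ s : lam.out → X, ∀ p : X, ¬ FLimitPt (F.1 : Filter lam.out) s p :=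
      fun F => hbad F.1 F.2
    choose XX tX hKX sq hs using hbad'
    have hT : ∃ D0 : Ultrafilter lam.out, (∀ A ∈ D0, #A = lam) := by
      obtain ⟨D0, hD0, -⟩ := exists_uniform_ultra hinf ⊤ (by
        intro t ht
        rw [Filter.mem_top] at ht
        subst ht
        rw [Cardinal.mk_univ, Cardinal.mk_out])
      exact ⟨D0, hD0⟩
    obtain ⟨D0, hD0⟩ := hT
    haveI : Nonempty {F : Ultrafilter lam.out // ∀ A ∈ F, #A = lam} := ⟨⟨D0, hD0⟩⟩
    -- a surjection from `Set (Set lam.out)` onto the uniform ultrafilters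
    have hinj : Function.Injective
        (fun F : {F : Ultrafilter lam.out // ∀ A ∈ F, #A = lam} =>
          ((F.1 : Filter lam.out).sets : Set (Set lam.out))) := by
      intro F G hFG
      exact Subtype.ext (Ultrafilter.coe_injective (Filter.filter_eq hFG))
    set σ := Function.invFun
      (fun F : {F : Ultrafilter lam.out // ∀ A ∈ F, #A = lam} =>
        ((F.1 : Filter lam.out).sets : Set (Set lam.out))) with hσdef
    have hσ : Function.Surjective σ := Function.invFun_surjective hinj
    have hJ : #(Set (Set lam.out)) = (2 : Cardinal.{u}) ^ ((2 : Cardinal.{u}) ^ lam) := by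
      rw [Cardinal.mk_set, Cardinal.mk_set, Cardinal.mk_out]
    letI tY : ∀ j : Set (Set lam.out), TopologicalSpace (XX (σ j)) := fun j => tX (σ j)
    have hcap : CAP lam (∀ j : Set (Set lam.out), XX (σ j)) :=
      h2 (Set (Set lam.out)) hJ (fun j => XX (σ j)) (fun j => hKX (σ j))
    set y : lam.out → ∀ j : Set (Set lam.out), XX (σ j) := fun i j => sq (σ j) i with hydef
    have hAle : #(Set.range y) ≤ lam := by
      have := Cardinal.mk_range_le (f := y)
      rwa [Cardinal.mk_out] at this
    rcases eq_or_lt_of_le hAle with hAeq | hAlt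
    · -- the range of the diagonal sequence has size `lam`
      obtain ⟨p, hp⟩ := hcap (Set.range y) hAeq
      have hG : ∀ t ∈ Filter.comap y (nhds p), lam ≤ #t := by
        intro t ht
        rw [Filter.mem_comap] at ht
        obtain ⟨V, hV, hVt⟩ := ht
        obtain ⟨U, hUV, hUopen, hpU⟩ := mem_nhds_iff.mp hV
        have h1 : #(↥(U ∩ Set.range y)) = #(Set.range y) := hp U hUopen hpU
        have hsurj : #(↥(U ∩ Set.range y)) ≤ #(↥(y ⁻¹' U)) := by
          refine Cardinal.mk_le_of_surjective (f := fun i : ↥(y ⁻¹' U) =>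
            (⟨y i.1, i.2, ⟨i.1, rfl⟩⟩ : ↥(U ∩ Set.range y))) ?_
          rintro ⟨a, haU, i, rfl⟩
          exact ⟨⟨i, haU⟩, rfl⟩
        calc lam = #(↥(U ∩ Set.range y)) := by rw [h1, hAeq]
          _ ≤ #(↥(y ⁻¹' U)) := hsurj
          _ ≤ #(↥t) := Cardinal.mk_le_mk_of_subset
              (subset_trans (Set.preimage_mono hUV) hVt)
      obtain ⟨D, hDunif, hDle⟩ := exists_uniform_ultra hinf _ hG
      obtain ⟨j, hj⟩ := hσ ⟨D, hDunif⟩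
      apply hs (σ j) (p j)
      rw [fLimitPt_iff_tendsto]
      have hy : Filter.Tendsto y (D : Filter lam.out) (nhds p) :=
        Filter.tendsto_iff_comap.mpr hDle
      have hfil : ((σ j).1 : Filter lam.out) = (D : Filter lam.out) := by rw [hj]
      rw [hfil]
      exact tendsto_pi_nhds.mp hy j
    · -- the range is small: some fiber is large
      have hcover : (Set.univ : Set lam.out) =
          ⋃ a : (Set.range y), y ⁻¹' {a.1} := by
        ext i
        simp only [Set.mem_univ, true_iff, Set.mem_iUnion]
        exact ⟨⟨y i, ⟨i, rfl⟩⟩, rfl⟩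
      have hfib : ∃ a : (Set.range y), lam ≤ #(↥(y ⁻¹' {a.1})) := by
        by_contra hc
        push_neg at hc
        have hle2 : lam ≤ Cardinal.sum (fun a : (Set.range y) => #(↥(y ⁻¹' {a.1}))) := by
          calc lam = #lam.out := (Cardinal.mk_out lam).symm
            _ = #(↥(Set.univ : Set lam.out)) := Cardinal.mk_univ.symm
            _ = #(↥(⋃ a : (Set.range y), y ⁻¹' {a.1})) := by rw [← hcover]
            _ ≤ _ := Cardinal.mk_iUnion_le_sum_mk
        exact absurd (lt_of_le_of_lt hle2
          (Cardinal.sum_lt_of_isRegular hreg hAlt hc)) (lt_irrefl lam)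
      obtain ⟨a, ha⟩ := hfib
      have hG : ∀ t ∈ Filter.principal (y ⁻¹' {a.1}), lam ≤ #t := fun t ht =>
        le_trans ha (Cardinal.mk_le_mk_of_subset (Filter.mem_principal.mp ht))
      obtain ⟨D, hDunif, hDle⟩ := exists_uniform_ultra hinf _ hG
      have hB : y ⁻¹' {a.1} ∈ D := hDle (Filter.mem_principal_self _)
      obtain ⟨j, hj⟩ := hσ ⟨D, hDunif⟩
      apply hs (σ j) (a.1 j)
      intro U hU hpU
      have hfil : ((σ j).1 : Filter lam.out) = (D : Filter lam.out) := by rw [hj]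
      rw [hfil]
      refine Filter.mem_of_superset hB ?_
      intro i hi
      have hia : y i = a.1 := hi
      show y i j ∈ U
      rw [hia]
      exact hpU
  tfae_finish
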